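/- For a positive integer n, the energy integral of the global Maxwellian satisfies (1/2) ∫_{ℝⁿ} |v|² · C e^{-|v|²/2}/(1 - kC e^{-|v|²/2}) dv = (n/2)(2π)^{n/2} C L_{(n/2)+1}(kC), provided C > 0 and kC < 1. -/

import Mathlib

open MeasureTheory Metric Set

/-- Integral representation of `L_s(z)` for real `s > 0` and `z < 1`:
`L_s(z) = (2^{1-s}/Γ(s)) ∫_0^∞ e^{-r²/2} r^{2s-1}/(1 - z e^{-r²/2}) dr`. -/
noncomputable def Lint (s z : ℝ) : ℝ :=
  (2 ^ (1 - s) / Real.Gamma s) *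
    ∫ r in Set.Ioi (0:ℝ),
      Real.exp (-r ^ 2 / 2) * r ^ (2 * s - 1) / (1 - z * Real.exp (-r ^ 2 / 2))

/-- energy integral of the global Maxwellian:
`(1/2)∫_{ℝⁿ} |v|² C e^{-|v|²/2}/(1-kC e^{-|v|²/2}) dv = (n/2)(2π)^{n/2} C L_{(n/2)+1}(kC)`. -/
theorem maxwellian_energy_integral (n : ℕ) (hn : 1 ≤ n) (k C : ℝ) (hC : 0 < C)
    (hkC : k * C < 1) :
    (1/2) * ∫ v : EuclideanSpace ℝ (Fin n),
        ‖v‖ ^ 2 * (C * Real.exp (-‖v‖ ^ 2 / 2) / (1 - k * C * Real.exp (-‖v‖ ^ 2 / 2))) =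
      ((n : ℝ)/2) * (2 * Real.pi) ^ ((n : ℝ)/2) * C * Lint ((n : ℝ)/2 + 1) (k * C) := by
  haveI : Nonempty (Fin n) := ⟨⟨0, hn⟩⟩
  haveI : Nontrivial (EuclideanSpace ℝ (Fin n)) :=
    inferInstance
  rw [integral_fun_norm_addHaar (volume : Measure (EuclideanSpace ℝ (Fin n)))
      (fun r => r ^ 2 * (C * Real.exp (-r ^ 2 / 2) / (1 - k * C * Real.exp (-r ^ 2 / 2))))]
  rw [finrank_euclideanSpace_fin, measureReal_def, EuclideanSpace.volume_ball, Fintype.card_fin]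
  have hΓ : 0 < Real.Gamma ((n : ℝ) / 2 + 1) :=
    Real.Gamma_pos_of_pos (by positivity)
  -- rewrite the radial integral
  have hint : ∫ y in Ioi (0 : ℝ), y ^ (n - 1) •
      (y ^ 2 * (C * Real.exp (-y ^ 2 / 2) / (1 - k * C * Real.exp (-y ^ 2 / 2)))) =
      C * ∫ r in Ioi (0:ℝ),
        Real.exp (-r ^ 2 / 2) * r ^ (2 * ((n : ℝ)/2 + 1) - 1) /
          (1 - k * C * Real.exp (-r ^ 2 / 2)) := by
    rw [← integral_const_mul]
    refine setIntegral_congr_fun measurableSet_Ioi fun y hy => ?_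
    have h1 : (2 * ((n : ℝ)/2 + 1) - 1) = ((n + 1 : ℕ) : ℝ) := by push_cast; ring
    rw [h1, Real.rpow_natCast, smul_eq_mul]
    have h2 : y ^ (n - 1) * y ^ 2 = y ^ (n + 1) := by
      rw [← pow_add]; congr 1; omega
    field_simp
    rw [← h2]
  rw [nsmul_eq_mul, smul_eq_mul, hint, Lint]
  have hV : ((ENNReal.ofReal 1) ^ n *
      ENNReal.ofReal (Real.sqrt Real.pi ^ n / Real.Gamma ((n:ℝ) / 2 + 1))).toReal =
      Real.sqrt Real.pi ^ n / Real.Gamma ((n:ℝ) / 2 + 1) := by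
    rw [ENNReal.ofReal_one, one_pow, one_mul, ENNReal.toReal_ofReal (by positivity)]
  rw [hV]
  -- now a scalar identity
  have hsqrt : Real.sqrt Real.pi ^ n = Real.pi ^ ((n : ℝ) / 2) := by
    rw [Real.sqrt_eq_rpow, ← Real.rpow_natCast (Real.pi ^ ((1:ℝ)/2)) n,
      ← Real.rpow_mul Real.pi_pos.le]
    congr 1; push_cast; ring
  have h2pi : (2 * Real.pi) ^ ((n : ℝ) / 2) =
      2 ^ ((n : ℝ) / 2) * Real.pi ^ ((n : ℝ) / 2) :=
    Real.mul_rpow (by norm_num) Real.pi_pos.le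
  have h2 : (2 : ℝ) ^ (1 - ((n : ℝ)/2 + 1)) = (2 ^ ((n : ℝ)/2))⁻¹ := by
    rw [show (1 - ((n : ℝ)/2 + 1)) = -((n:ℝ)/2) by ring, Real.rpow_neg (by norm_num)]
  rw [hsqrt, h2pi, h2]
  have h2pos : (0:ℝ) < 2 ^ ((n : ℝ)/2) := Real.rpow_pos_of_pos (by norm_num) _
  field_simp
  ring
  congr 1; funext r; ring
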